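/- arXiv:1401.4567 — 5 statements merged into one kernel-verified Lean document; each statement's English description precedes it below -/
import Mathlib

section
/- Let F be a field, n ≥ 1, and let A be a singular n×n matrix over F (i.e., A is not invertible). Then for every finite subset S ⊆ F, the number of vectors b ∈ S^n (vectors all of whose n coordinates lie in S) for which the linear system A·w = b has a solution w ∈ F^n is at most |S|^(n−1). -/
open Classical in
theorem nonsingularity_certificate_soundness
    (F : Type*) [Field F] (n : ℕ) (hn : 1 ≤ n)
    (A : Matrix (Fin n) (Fin n) F) (hA : ¬ IsUnit A)
    (S : Finset F) :
    ((Fintype.piFinset (fun _ : Fin n => S)).filter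
        (fun b => ∃ w : Fin n → F, A.mulVec w = b)).card ≤ S.card ^ (n - 1) := by
  classical
  -- A is singular, so det A = 0
  have hdet : A.det = 0 := by
    by_contra h
    exact hA ((Matrix.isUnit_iff_isUnit_det A).mpr (isUnit_iff_ne_zero.mpr h))
  obtain ⟨u, hu0, huA⟩ := (Matrix.exists_vecMul_eq_zero_iff).mpr hdet
  obtain ⟨i, hi⟩ := Function.ne_iff.mp hu0
  -- every b in the range satisfies u ⬝ b = 0
  have key : ∀ b, (∃ w : Fin n → F, A.mulVec w = b) → ∑ j, u j * b j = 0 := by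
    rintro b ⟨w, rfl⟩
    have := Matrix.dotProduct_mulVec u A w
    rw [huA, zero_dotProduct] at this
    simpa [dotProduct] using this
  -- injection by forgetting coordinate i
  have hcard : Fintype.card {j : Fin n // j ≠ i} = n - 1 := by
    simp [Fintype.card_subtype_compl]
  calc ((Fintype.piFinset (fun _ : Fin n => S)).filter
        (fun b => ∃ w : Fin n → F, A.mulVec w = b)).card
      ≤ (Fintype.piFinset (fun _ : {j : Fin n // j ≠ i} => S)).card := by
        apply Finset.card_le_card_of_injOn (fun b => fun j => b j.1)
        · intro b hb
          simp only [Finset.mem_coe, Finset.mem_filter, Fintype.mem_piFinset] at hb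
          exact Fintype.mem_piFinset.mpr fun j => hb.1 j.1
        · intro b hb b' hb' heq
          simp only [Finset.mem_coe, Finset.mem_filter, Fintype.mem_piFinset] at hb hb'
          have hoff : ∀ j, j ≠ i → b j = b' j := fun j hj =>
            congrFun heq ⟨j, hj⟩
          have h1 := key b hb.2
          have h2 := key b' hb'.2
          rw [← Finset.add_sum_erase _ _ (Finset.mem_univ i)] at h1 h2
          have hsum : ∑ j ∈ Finset.univ.erase i, u j * b j
              = ∑ j ∈ Finset.univ.erase i, u j * b' j := by
            apply Finset.sum_congr rfl
            intro j hj
            rw [hoff j (Finset.ne_of_mem_erase hj)]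
          have : u i * b i = u i * b' i := by
            have := h1.trans h2.symm
            rw [hsum] at this
            exact add_right_cancel this
          have hbi : b i = b' i := mul_left_cancel₀ (by simpa using hi) this
          funext j
          by_cases hj : j = i
          · rw [hj]; exact hbi
          · exact hoff j hj
    _ = S.card ^ (n - 1) := by
        rw [Fintype.card_piFinset]
        simp [hcard]
end

section
/- Let F be a field, let A be an m×n matrix, B an n×p matrix, and C an m×p matrix over F with p ≥ 1 and C ≠ A·B, and let S ⊆ F be a finite subset. Then the number of vectors v ∈ S^p (vectors all of whose p coordinates lie in S) satisfying A·(B·v) = C·v is at most |S|^(p−1). -/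
open Classical in
theorem freivalds_check_soundness
    (F : Type*) [Field F] (m n p : ℕ) (hp : 1 ≤ p)
    (A : Matrix (Fin m) (Fin n) F) (B : Matrix (Fin n) (Fin p) F)
    (C : Matrix (Fin m) (Fin p) F) (hC : C ≠ A * B)
    (S : Finset F) :
    ((Fintype.piFinset (fun _ : Fin p => S)).filter
        (fun v => A.mulVec (B.mulVec v) = C.mulVec v)).card ≤ S.card ^ (p - 1) := by
  set D := C - A * B with hD
  have hDne : D ≠ 0 := sub_ne_zero.mpr hC
  obtain ⟨i, j, hij⟩ : ∃ i j, D i j ≠ 0 := by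
    by_contra h
    push_neg at h
    exact hDne (by ext i j; simpa using h i j)
  have key : ∀ v : Fin p → F, A.mulVec (B.mulVec v) = C.mulVec v ↔ D.mulVec v = 0 := by
    intro v
    rw [Matrix.mulVec_mulVec, hD, Matrix.sub_mulVec, sub_eq_zero, eq_comm]
  have hmaps : ∀ v ∈ (Fintype.piFinset (fun _ : Fin p => S)).filter
      (fun v => A.mulVec (B.mulVec v) = C.mulVec v),
      (fun k : {k : Fin p // k ≠ j} => v k.1) ∈
        Fintype.piFinset (fun _ : {k : Fin p // k ≠ j} => S) := by
    intro v hv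
    simp only [Finset.mem_filter, Fintype.mem_piFinset] at hv ⊢
    exact fun k => hv.1 k.1
  have hinj : Set.InjOn (fun (v : Fin p → F) (k : {k : Fin p // k ≠ j}) => v k.1)
      (((Fintype.piFinset (fun _ : Fin p => S)).filter
        (fun v => A.mulVec (B.mulVec v) = C.mulVec v)) : Finset (Fin p → F)) := by
    intro v hv w hw hvw
    simp only [Finset.coe_filter, Set.mem_setOf_eq] at hv hw
    have hvD := (key v).mp hv.2
    have hwD := (key w).mp hw.2
    have heq : ∀ k : Fin p, k ≠ j → v k = w k := fun k hk =>
      congrFun hvw ⟨k, hk⟩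
    have hvi : ∑ k, D i k * v k = 0 := by
      have := congrFun hvD i
      simpa [Matrix.mulVec, dotProduct] using this
    have hwi : ∑ k, D i k * w k = 0 := by
      have := congrFun hwD i
      simpa [Matrix.mulVec, dotProduct] using this
    have hrow : ∑ k, D i k * (v k - w k) = 0 := by
      simp [mul_sub, Finset.sum_sub_distrib, hvi, hwi]
    have hsingle : D i j * (v j - w j) = 0 := by
      have h1 : ∑ k, D i k * (v k - w k) = D i j * (v j - w j) :=
        Finset.sum_eq_single (f := fun k => D i k * (v k - w k)) j
          (fun k _ hk => by show D i k * (v k - w k) = 0; rw [heq k hk, sub_self, mul_zero])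
          (fun h => absurd (Finset.mem_univ j) h)
      rw [← h1]; exact hrow
    have hvw_j : v j = w j := by
      rcases mul_eq_zero.mp hsingle with h | h
      · exact absurd h hij
      · exact sub_eq_zero.mp h
    funext k
    by_cases hk : k = j
    · rw [hk]; exact hvw_j
    · exact heq k hk
  calc ((Fintype.piFinset (fun _ : Fin p => S)).filter
        (fun v => A.mulVec (B.mulVec v) = C.mulVec v)).card
      ≤ (Fintype.piFinset (fun _ : {k : Fin p // k ≠ j} => S)).card :=
        Finset.card_le_card_of_injOn _ hmaps hinj
    _ = S.card ^ (p - 1) := by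
        rw [Fintype.card_piFinset]
        simp only [Finset.prod_const, Finset.card_univ]
        congr 1
        have : Fintype.card {k : Fin p // k ≠ j} = p - 1 := by
          rw [Fintype.card_subtype_compl, Fintype.card_fin]
          simp [Fintype.card_subtype_eq]
        exact this
end

section
/- Let A be an m×n integer matrix whose rank over ℚ equals r, and suppose there exist injective maps ρ : {0,…,r−1} → {0,…,m−1} and γ : {0,…,r−1} → {0,…,n−1} such that d := det(A[ρ, γ]) is a nonzero integer, where A[ρ, γ] is the r×r submatrix of A with rows ρ and columns γ. Then for every prime p that does not divide d, the rank over ℤ/pℤ of the reduction of A modulo p equals r. -/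
open Matrix

/-- A submatrix (with arbitrary row/column selections) has rank at most that of the matrix. -/
lemma rank_submatrix_le_aux {K : Type*} [Field K] {m n r : ℕ}
    (A : Matrix (Fin m) (Fin n) K) (ρ : Fin r → Fin m) (γ : Fin r → Fin n) :
    (A.submatrix ρ γ).rank ≤ A.rank := by
  have h1 : A.submatrix ρ γ =
      (((1 : Matrix (Fin m) (Fin m) K).submatrix ρ (Equiv.refl (Fin m))) * A) *
        ((1 : Matrix (Fin n) (Fin n) K).submatrix (Equiv.refl (Fin n)) γ) := by
    rw [Matrix.one_submatrix_mul, Matrix.mul_submatrix_one]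
    simp [Matrix.submatrix_submatrix]
  rw [h1]
  exact (Matrix.rank_mul_le_left _ _).trans (Matrix.rank_mul_le_right _ _)

/-- A square matrix over a field with nonzero determinant has full rank. -/
lemma rank_eq_of_det_ne_zero {K : Type*} [Field K] {r : ℕ}
    (M : Matrix (Fin r) (Fin r) K) (h : M.det ≠ 0) : M.rank = r := by
  have : IsUnit M := (Matrix.isUnit_iff_isUnit_det M).mpr (isUnit_iff_ne_zero.mpr h)
  simpa using Matrix.rank_of_isUnit M this

theorem rank_mod_p_eq_of_not_dvd_minor
    (m n r : ℕ) (A : Matrix (Fin m) (Fin n) ℤ)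
    (hr : (A.map (Int.cast : ℤ → ℚ)).rank = r)
    (ρ : Fin r → Fin m) (γ : Fin r → Fin n)
    (hρ : Function.Injective ρ) (hγ : Function.Injective γ)
    (d : ℤ) (hd : d = (A.submatrix ρ γ).det) (hd0 : d ≠ 0) :
    ∀ (p : ℕ) [Fact p.Prime], ¬ ((p : ℤ) ∣ d) →
      (A.map (Int.cast : ℤ → ZMod p)).rank = r := by
  -- notation over ℚ
  set f : ℤ →+* ℚ := Int.castRingHom ℚ with hf
  set Aq : Matrix (Fin m) (Fin n) ℚ := A.map (Int.cast : ℤ → ℚ) with hAq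
  set Mq : Matrix (Fin r) (Fin r) ℚ := Aq.submatrix ρ γ with hMq
  set Cq : Matrix (Fin m) (Fin r) ℚ := Aq.submatrix id γ with hCq
  set Bq : Matrix (Fin r) (Fin n) ℚ := Aq.submatrix ρ id with hBq
  have hMqdet : Mq.det = (d : ℚ) := by
    rw [hMq, hAq]
    rw [Matrix.submatrix_map]
    have h0 : ((A.submatrix ρ γ).map (Int.cast : ℤ → ℚ)).det = f (A.submatrix ρ γ).det :=
      (RingHom.map_det f _).symm
    rw [h0, hd]
    simp [f]
  have hMqdet0 : Mq.det ≠ 0 := by rw [hMqdet]; exact_mod_cast hd0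
  -- rank of Cq is r
  have hCqrank : Cq.rank = r := by
    refine le_antisymm ?_ ?_
    · simpa using Cq.rank_le_card_width
    · have h1 : (Cq.submatrix ρ (id : Fin r → Fin r)).rank ≤ Cq.rank :=
        rank_submatrix_le_aux Cq ρ id
      have h2 : Cq.submatrix ρ (id : Fin r → Fin r) = Mq := rfl
      rw [h2, rank_eq_of_det_ne_zero Mq hMqdet0] at h1
      exact h1
  -- the span of the columns of Cq equals the span of the columns of Aq
  have hle : Submodule.span ℚ (Set.range Cqᵀ) ≤ Submodule.span ℚ (Set.range Aqᵀ) := by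
    rw [Submodule.span_le]
    rintro _ ⟨j, rfl⟩
    exact Submodule.subset_span ⟨γ j, rfl⟩
  have hspan : Submodule.span ℚ (Set.range Cqᵀ) = Submodule.span ℚ (Set.range Aqᵀ) := by
    apply Submodule.eq_of_le_of_finrank_le hle
    show Module.finrank ℚ (Submodule.span ℚ (Set.range (Matrix.col Aq))) ≤ Module.finrank ℚ (Submodule.span ℚ (Set.range (Matrix.col Cq)))
    rw [← Matrix.rank_eq_finrank_span_cols, ← Matrix.rank_eq_finrank_span_cols, hr, hCqrank]
  -- key identity over ℚ : Aq = Cq * (Mq⁻¹ * Bq)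
  have key : Cq * (Mq⁻¹ * Bq) = Aq := by
    ext i k
    have hmem : Aqᵀ k ∈ Submodule.span ℚ (Set.range Cqᵀ) := by
      rw [hspan]; exact Submodule.subset_span ⟨k, rfl⟩
    obtain ⟨x, hx⟩ := (Submodule.mem_span_range_iff_exists_fun ℚ).mp hmem
    -- Cq.mulVec x = column k of Aq
    have hmul : Cq.mulVec x = fun i => Aq i k := by
      funext i
      have := congrFun hx i
      simpa [Matrix.mulVec, dotProduct, Matrix.transpose_apply, mul_comm] using this
    have hrow : Mq.mulVec x = fun j => Aq (ρ j) k := by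
      funext j
      have h1 : Mq.mulVec x j = Cq.mulVec x (ρ j) := rfl
      rw [h1, hmul]
    have hxeq : x = Mq⁻¹.mulVec (fun j => Aq (ρ j) k) := by
      rw [← hrow, Matrix.mulVec_mulVec, Matrix.nonsing_inv_mul Mq (isUnit_iff_ne_zero.mpr hMqdet0), Matrix.one_mulVec]
    have hcol : (fun j => (Mq⁻¹ * Bq) j k) = x := by
      rw [hxeq]
      funext j
      simp [Matrix.mul_apply, Matrix.mulVec, dotProduct, hBq]
    calc (Cq * (Mq⁻¹ * Bq)) i k = Cq.mulVec (fun j => (Mq⁻¹ * Bq) j k) i := by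
          simp [Matrix.mul_apply, Matrix.mulVec, dotProduct]
      _ = Cq.mulVec x i := by rw [hcol]
      _ = Aq i k := by rw [hmul]
  -- adjugate identity over ℚ
  have hadj : Mq.adjugate = (d : ℚ) • Mq⁻¹ := by
    have h1 : Mq⁻¹ = (Mq.det)⁻¹ • Mq.adjugate := by
      rw [Matrix.inv_def]
      congr 1
      exact Ring.inverse_eq_inv _
    rw [h1, hMqdet, smul_smul]
    have : (d : ℚ) ≠ 0 := by exact_mod_cast hd0
    rw [mul_inv_cancel₀ this, one_smul]
  -- the identity over ℚ with integer entries
  have keyQ : Cq * (Mq.adjugate * Bq) = (d : ℚ) • Aq := by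
    rw [hadj, Matrix.smul_mul, Matrix.mul_smul, key]
  -- transfer to ℤ
  have keyZ : (A.submatrix id γ) * ((A.submatrix ρ γ).adjugate * (A.submatrix ρ id)) = d • A := by
    have hinj : Function.Injective fun (B : Matrix (Fin m) (Fin n) ℤ) => B.map f := by
      intro B1 B2 h
      ext i k
      have := congrFun (congrFun h i) k
      simpa [f] using this
    apply hinj
    have hC : (A.submatrix id γ).map f = Cq := by
      rw [hCq, hAq]; exact (Matrix.submatrix_map _ _ _ _).symm
    have hB : (A.submatrix ρ id).map f = Bq := by
      rw [hBq, hAq]; exact (Matrix.submatrix_map _ _ _ _).symm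
    have hM : (A.submatrix ρ γ).map f = Mq := by
      rw [hMq, hAq]; exact (Matrix.submatrix_map _ _ _ _).symm
    show (A.submatrix id γ * ((A.submatrix ρ γ).adjugate * A.submatrix ρ id)).map ⇑f
      = (d • A).map ⇑f
    have hadjmap : ((A.submatrix ρ γ).adjugate).map ⇑f = Mq.adjugate := by
      have := RingHom.map_adjugate f (A.submatrix ρ γ)
      simp only [RingHom.mapMatrix_apply] at this
      rw [this]
      congr 1
    rw [Matrix.map_mul, Matrix.map_mul, hC, hB, hadjmap, keyQ]
    ext i k
    simp [f, hAq]
  -- now work modulo p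
  intro p _ hp
  set g : ℤ →+* ZMod p := Int.castRingHom (ZMod p) with hg
  set Ap : Matrix (Fin m) (Fin n) (ZMod p) := A.map (Int.cast : ℤ → ZMod p) with hAp
  have hdp : (d : ZMod p) ≠ 0 := by
    rw [Ne, ZMod.intCast_zmod_eq_zero_iff_dvd]
    exact_mod_cast hp
  -- reduce keyZ mod p
  have keyP : (Ap.submatrix id γ) * (((Ap.submatrix ρ γ)).adjugate * (Ap.submatrix ρ id))
      = (d : ZMod p) • Ap := by
    have h1 : Ap.submatrix id γ = (A.submatrix id γ).map g := Matrix.submatrix_map _ _ _ _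
    have h2 : Ap.submatrix ρ id = (A.submatrix ρ id).map g := Matrix.submatrix_map _ _ _ _
    have h3 : Ap.submatrix ρ γ = (A.submatrix ρ γ).map g := Matrix.submatrix_map _ _ _ _
    have hadjmap : ((A.submatrix ρ γ).map ⇑g).adjugate = ((A.submatrix ρ γ).adjugate).map ⇑g := by
      have := RingHom.map_adjugate g (A.submatrix ρ γ)
      simp only [RingHom.mapMatrix_apply] at this
      rw [this]
    rw [h1, h2, h3, hadjmap, ← Matrix.map_mul, ← Matrix.map_mul, keyZ]
    ext i k
    simp [g, hAp]
  -- upper bound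
  have hub : Ap.rank ≤ r := by
    have hA : Ap = (Ap.submatrix id γ) *
        ((d : ZMod p)⁻¹ • ((Ap.submatrix ρ γ).adjugate * (Ap.submatrix ρ id))) := by
      rw [Matrix.mul_smul, keyP, smul_smul, inv_mul_cancel₀ hdp, one_smul]
    calc Ap.rank ≤ ((d : ZMod p)⁻¹ • ((Ap.submatrix ρ γ).adjugate * (Ap.submatrix ρ id))).rank := by
          conv_lhs => rw [hA]
          exact Matrix.rank_mul_le_right _ _
      _ ≤ r := by
          have := Matrix.rank_le_card_height
            ((d : ZMod p)⁻¹ • ((Ap.submatrix ρ γ).adjugate * (Ap.submatrix ρ id)))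
          simpa using this
  -- lower bound
  have hlb : r ≤ Ap.rank := by
    have hdet : (Ap.submatrix ρ γ).det ≠ 0 := by
      have h3 : Ap.submatrix ρ γ = (A.submatrix ρ γ).map g := Matrix.submatrix_map _ _ _ _
      have h4 := RingHom.map_det g (A.submatrix ρ γ)
      simp only [RingHom.mapMatrix_apply] at h4
      rw [h3, ← h4, ← hd]
      simpa [g] using hdp
    have := rank_submatrix_le_aux Ap ρ γ
    rw [rank_eq_of_det_ne_zero _ hdet] at this
    exact this
  exact le_antisymm hub hlb
end

section
/- Let A be an m×n integer matrix whose rank over ℚ equals r ≥ 1, and let d be a nonzero r×r minor of A (the determinant of the submatrix obtained by an injective choice of r rows and r columns). Then the set of primes p for which the rank over ℤ/pℤ of the reduction of A modulo p differs from r is finite and has cardinality at most log₂|d| (i.e., at most ⌊log₂|d|⌋). -/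
open Matrix Module Submodule

/-- The entrywise cast `ℤ^m → ℚ^m` as a `ℤ`-linear map. -/
noncomputable def intCastPiLM (m : ℕ) : (Fin m → ℤ) →ₗ[ℤ] (Fin m → ℚ) :=
  LinearMap.pi fun i => (Int.castAddHom ℚ).toIntLinearMap.comp (LinearMap.proj i)

lemma intCastPiLM_ker (m : ℕ) : LinearMap.ker (intCastPiLM m) = ⊥ := by
  rw [LinearMap.ker_eq_bot]
  intro a b hab
  funext j
  exact Int.cast_injective (congrFun hab j)

/-- `ℤ`-independent integer vectors are `ℚ`-independent after casting. -/
lemma lin_indep_rat_of_int {ι : Type*} {m : ℕ} {v : ι → Fin m → ℤ}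
    (h : LinearIndependent ℤ v) :
    LinearIndependent ℚ (fun i => fun j => ((v i j : ℤ) : ℚ)) := by
  have h2 : LinearIndependent ℤ (fun i => intCastPiLM m (v i)) :=
    h.map' _ (intCastPiLM_ker m)
  have h3 : LinearIndependent ℤ (fun i => fun j => ((v i j : ℤ) : ℚ)) := h2
  exact h3.localization ℚ (nonZeroDivisors ℤ)

/-- If the reductions mod a prime `p` of integer vectors are independent over `ZMod p`,
then the integer vectors are independent over `ℤ`. -/
lemma lin_indep_int_of_zmod {ι : Type*} [Fintype ι] {m p : ℕ} (hp : p.Prime)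
    {v : ι → Fin m → ℤ}
    (h : LinearIndependent (ZMod p) (fun i => fun j => ((v i j : ℤ) : ZMod p))) :
    LinearIndependent ℤ v := by
  rw [Fintype.linearIndependent_iff] at h ⊢
  intro c hc
  by_contra hne
  push_neg at hne
  obtain ⟨i₀, hi₀⟩ := hne
  have hg0 : Finset.gcd Finset.univ c ≠ 0 := by
    intro h0
    exact hi₀ (Finset.gcd_eq_zero_iff.mp h0 i₀ (Finset.mem_univ i₀))
  obtain ⟨c', hc', hgcd⟩ := Finset.extract_gcd c ⟨i₀, Finset.mem_univ i₀⟩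
  have hsum : ∑ i, c' i • v i = 0 := by
    have h1 : Finset.gcd Finset.univ c • (∑ i, c' i • v i) = 0 := by
      rw [Finset.smul_sum]
      rw [← hc]
      refine Finset.sum_congr rfl fun i _ => ?_
      rw [smul_smul, ← hc' i (Finset.mem_univ i)]
    rcases smul_eq_zero.mp h1 with h | h
    · exact absurd h hg0
    · exact h
  have hz : ∑ i, ((c' i : ZMod p)) • (fun j => ((v i j : ℤ) : ZMod p)) = 0 := by
    funext j
    have hj : ∑ i, c' i * v i j = 0 := by
      have := congrFun hsum j
      simpa using this
    have : ((∑ i, c' i * v i j : ℤ) : ZMod p) = 0 := by rw [hj]; simp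
    simpa [Finset.sum_apply] using this
  have hall := h (fun i => (c' i : ZMod p)) hz
  have hdvd : (p : ℤ) ∣ Finset.gcd Finset.univ c' := by
    refine Finset.dvd_gcd fun i _ => ?_
    exact (ZMod.intCast_zmod_eq_zero_iff_dvd _ _).mp (hall i)
  rw [hgcd] at hdvd
  have hp1 : p ∣ 1 := by exact_mod_cast hdvd
  exact hp.ne_one (Nat.dvd_one.mp hp1)

/-- Rank of a submatrix (arbitrary row/column selections) is at most the rank. -/
lemma rank_submatrix_le_general {K : Type*} [Field K] {m n r : ℕ}
    (A : Matrix (Fin m) (Fin n) K) (f : Fin r → Fin m) (g : Fin r → Fin n) :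
    (A.submatrix f g).rank ≤ A.rank := by
  have hcol : (A.submatrix id g).rank ≤ A.rank := by
    rw [rank_eq_finrank_span_cols, rank_eq_finrank_span_cols]
    apply Submodule.finrank_mono
    apply span_mono
    rintro x ⟨j, rfl⟩
    exact ⟨g j, rfl⟩
  have heq : A.submatrix f g
      = ((1 : Matrix (Fin m) (Fin m) K).submatrix f (Equiv.refl (Fin m)))
        * (A.submatrix id g) := by
    rw [Matrix.one_submatrix_mul]
    simp [Matrix.submatrix_submatrix]
  calc (A.submatrix f g).rank
      ≤ (A.submatrix id g).rank := by rw [heq]; exact Matrix.rank_mul_le_right _ _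
    _ ≤ A.rank := hcol

theorem rank_dropping_primes_finite_and_few
    (m n r : ℕ) (hr1 : 1 ≤ r) (A : Matrix (Fin m) (Fin n) ℤ)
    (hr : (A.map (Int.cast : ℤ → ℚ)).rank = r)
    (ρ : Fin r → Fin m) (γ : Fin r → Fin n)
    (hρ : Function.Injective ρ) (hγ : Function.Injective γ)
    (d : ℤ) (hd : d = (A.submatrix ρ γ).det) (hd0 : d ≠ 0) :
    {p : ℕ | p.Prime ∧ (A.map (Int.cast : ℤ → ZMod p)).rank ≠ r}.Finite ∧
    {p : ℕ | p.Prime ∧ (A.map (Int.cast : ℤ → ZMod p)).rank ≠ r}.ncard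
      ≤ Nat.log 2 d.natAbs := by
  classical
  -- Main claim: if p is a prime not dividing d then the rank mod p is r.
  have main : ∀ p : ℕ, p.Prime → ¬ ((p : ℤ) ∣ d) →
      (A.map (Int.cast : ℤ → ZMod p)).rank = r := by
    intro p hp hpd
    haveI : Fact p.Prime := ⟨hp⟩
    set B := A.map (Int.cast : ℤ → ZMod p) with hB
    -- lower bound
    have hdetcast : ((A.submatrix ρ γ).map (Int.cast : ℤ → ZMod p)).det ≠ 0 := by
      have hmm : ((A.submatrix ρ γ).map (Int.cast : ℤ → ZMod p))
          = (Int.castRingHom (ZMod p)).mapMatrix (A.submatrix ρ γ) := rfl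
      rw [hmm, ← RingHom.map_det]
      intro h0
      exact hpd ((ZMod.intCast_zmod_eq_zero_iff_dvd _ _).mp (hd ▸ h0))
    have hsubeq : B.submatrix ρ γ = (A.submatrix ρ γ).map (Int.cast : ℤ → ZMod p) := rfl
    have hlow : r ≤ B.rank := by
      have hUnit : IsUnit (B.submatrix ρ γ) := by
        rw [Matrix.isUnit_iff_isUnit_det, hsubeq]
        exact hdetcast.isUnit
      have := Matrix.rank_of_isUnit _ hUnit
      calc r = (B.submatrix ρ γ).rank := by rw [this]; simp
        _ ≤ B.rank := rank_submatrix_le_general B ρ γ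
    -- upper bound
    have hup : B.rank ≤ r := by
      obtain ⟨s, hsub, hspan, hind⟩ := exists_linearIndependent (ZMod p) (Set.range Bᵀ)
      have hsfin : s.Finite := (Set.finite_range Bᵀ).subset hsub
      haveI : Fintype s := hsfin.fintype
      have hcard : B.rank = s.toFinset.card := by
        rw [Matrix.rank_eq_finrank_span_cols]
        change finrank (ZMod p) (span (ZMod p) (Set.range Bᵀ)) = _
        rw [← hspan, finrank_span_set_eq_card hind]
      -- choose column indices
      have hchoose : ∀ x : s, ∃ j : Fin n, Bᵀ j = (x : Fin m → ZMod p) :=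
        fun x => hsub x.2
      choose θ hθ using hchoose
      set v : s → Fin m → ℤ := fun x => fun i => A i (θ x) with hv
      have hvcast : (fun x : s => fun i => ((v x i : ℤ) : ZMod p))
          = (fun x : s => (x : Fin m → ZMod p)) := by
        funext x
        exact hθ x
      have hindP : LinearIndependent (ZMod p)
          (fun x : s => fun i => ((v x i : ℤ) : ZMod p)) := by
        rw [hvcast]; exact hind
      have hindZ : LinearIndependent ℤ v := lin_indep_int_of_zmod hp hindP
      have hindQ : LinearIndependent ℚ (fun x : s => fun i => ((v x i : ℤ) : ℚ)) :=
        lin_indep_rat_of_int hindZ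
      have hle : Fintype.card s ≤ (A.map (Int.cast : ℤ → ℚ)).rank := by
        rw [Matrix.rank_eq_finrank_span_cols]
        rw [← finrank_span_eq_card hindQ]
        apply Submodule.finrank_mono
        apply span_mono
        rintro x ⟨y, rfl⟩
        exact ⟨θ y, rfl⟩
      rw [hr] at hle
      rwa [hcard, Set.toFinset_card]
    omega
  -- the set is contained in the prime factors of |d|
  have hsubset : {p : ℕ | p.Prime ∧ (A.map (Int.cast : ℤ → ZMod p)).rank ≠ r}
      ⊆ ↑(d.natAbs.primeFactors) := by
    intro p hpmem
    obtain ⟨hp, hrank⟩ := hpmem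
    have hdvd : (p : ℤ) ∣ d := by
      by_contra hnd
      exact hrank (main p hp hnd)
    have : p ∣ d.natAbs := by
      rw [← Int.natCast_dvd_natCast]
      exact (Int.dvd_natAbs).mpr hdvd
    simp only [Finset.coe_sort_coe, Finset.mem_coe, Nat.mem_primeFactors]
    exact ⟨hp, this, fun h => hd0 (Int.natAbs_eq_zero.mp h)⟩
  have hfin : {p : ℕ | p.Prime ∧ (A.map (Int.cast : ℤ → ZMod p)).rank ≠ r}.Finite :=
    (d.natAbs.primeFactors : Set ℕ).toFinite.subset hsubset
  refine ⟨hfin, ?_⟩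
  have hcard1 : {p : ℕ | p.Prime ∧ (A.map (Int.cast : ℤ → ZMod p)).rank ≠ r}.ncard
      ≤ d.natAbs.primeFactors.card := by
    have := Set.ncard_le_ncard hsubset (d.natAbs.primeFactors : Set ℕ).toFinite
    rwa [Set.ncard_coe_finset] at this
  refine hcard1.trans ?_
  have hne : d.natAbs ≠ 0 := fun h => hd0 (Int.natAbs_eq_zero.mp h)
  have hpow : 2 ^ d.natAbs.primeFactors.card ≤ d.natAbs := by
    calc 2 ^ d.natAbs.primeFactors.card
        = ∏ _p ∈ d.natAbs.primeFactors, 2 := by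
          rw [Finset.prod_const]
      _ ≤ ∏ p ∈ d.natAbs.primeFactors, p := by
          apply Finset.prod_le_prod
          · intros; omega
          · intro p hpf
            exact (Nat.prime_of_mem_primeFactors hpf).two_le
      _ ≤ d.natAbs := Nat.le_of_dvd (Nat.pos_of_ne_zero hne)
          (Nat.prod_primeFactors_dvd _)
  exact (Nat.le_log_iff_pow_le (by norm_num) hne).mpr hpow
end

section
/- Let F be a field, n ≥ 1, let A be a singular n×n matrix over F, let S ⊆ F be a finite subset, and let k ≥ 1. Then the number of k-tuples (b_1, …, b_k) of vectors in S^n (each b_j having all its n coordinates in S) such that for every j ∈ {1, …, k} the system A·w = b_j has a solution w ∈ F^n is at most |S|^(k·(n−1)). In particular, k independent repetitions of the consistency test accept a singular matrix with probability at most 1/|S|^k. -/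
open Finset

open Classical in
lemma single_round_soundness_aux
    (F : Type*) [Field F] (n : ℕ)
    (A : Matrix (Fin n) (Fin n) F) (hA : ¬ IsUnit A) (S : Finset F) :
    ((Fintype.piFinset (fun _ : Fin n => S)).filter
        (fun b => ∃ w : Fin n → F, A.mulVec w = b)).card ≤ S.card ^ (n - 1) := by
  have hdet : A.det = 0 := by
    by_contra h
    exact hA ((Matrix.isUnit_iff_isUnit_det A).2 (isUnit_iff_ne_zero.2 h))
  have hdetT : A.transpose.det = 0 := by rw [Matrix.det_transpose]; exact hdet
  obtain ⟨v, hv0, hv⟩ := (Matrix.exists_mulVec_eq_zero_iff).2 hdetT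
  obtain ⟨i0, hi0⟩ : ∃ i, v i ≠ 0 := by
    by_contra h
    push_neg at h
    exact hv0 (funext h)
  have key : ∀ b : Fin n → F, (∃ w, A.mulVec w = b) → dotProduct v b = 0 := by
    rintro b ⟨w, rfl⟩
    rw [Matrix.dotProduct_mulVec, ← Matrix.mulVec_transpose, hv, zero_dotProduct]
  have hsub : Fintype.card {i : Fin n // i ≠ i0} = n - 1 := by
    simp [Fintype.card_subtype_compl]
  have hcard : (Fintype.piFinset (fun _ : {i : Fin n // i ≠ i0} => S)).card
      = S.card ^ (n - 1) := by
    rw [Fintype.card_piFinset, Finset.prod_const, Finset.card_univ, hsub]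
  rw [← hcard]
  apply Finset.card_le_card_of_injOn (fun b (i : {i : Fin n // i ≠ i0}) => b i.1)
  · intro b hb
    rw [Finset.mem_coe, Finset.mem_filter] at hb
    rw [Finset.mem_coe, Fintype.mem_piFinset]
    intro i
    exact (Fintype.mem_piFinset.1 hb.1) i.1
  · intro b hb c hc hbc
    rw [Finset.mem_coe, Finset.mem_filter] at hb hc
    have hvb := key b hb.2
    have hvc := key c hc.2
    funext i
    by_cases hi : i = i0
    · subst hi
      have hsum : ∀ d : Fin n → F,
          dotProduct v d = v i * d i + ∑ j ∈ Finset.univ.erase i, v j * d j := by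
        intro d
        rw [dotProduct, ← Finset.add_sum_erase _ _ (Finset.mem_univ i)]
      have heq : ∑ j ∈ Finset.univ.erase i, v j * b j
          = ∑ j ∈ Finset.univ.erase i, v j * c j := by
        apply Finset.sum_congr rfl
        intro j hj
        have hji : j ≠ i := (Finset.mem_erase.1 hj).1
        have := congrFun hbc ⟨j, hji⟩
        simp only at this
        rw [this]
      have : v i * b i = v i * c i := by
        have h1 := hsum b
        have h2 := hsum c
        rw [hvb] at h1
        rw [hvc] at h2
        rw [heq] at h1
        exact add_right_cancel (h1.symm.trans h2)
      exact mul_left_cancel₀ hi0 this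
    · exact congrFun hbc ⟨i, hi⟩

open Classical in
theorem nonsingularity_certificate_repeated_soundness
    (F : Type*) [Field F] (n : ℕ) (hn : 1 ≤ n)
    (A : Matrix (Fin n) (Fin n) F) (hA : ¬ IsUnit A)
    (S : Finset F) (k : ℕ) (hk : 1 ≤ k) :
    ((Fintype.piFinset (fun _ : Fin k => Fintype.piFinset (fun _ : Fin n => S))).filter
        (fun b => ∀ j : Fin k, ∃ w : Fin n → F, A.mulVec w = b j)).card
      ≤ S.card ^ (k * (n - 1)) := by
  set B := (Fintype.piFinset (fun _ : Fin n => S)).filter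
      (fun b => ∃ w : Fin n → F, A.mulVec w = b) with hB
  have hsub : ((Fintype.piFinset (fun _ : Fin k => Fintype.piFinset (fun _ : Fin n => S))).filter
        (fun b => ∀ j : Fin k, ∃ w : Fin n → F, A.mulVec w = b j))
      ⊆ Fintype.piFinset (fun _ : Fin k => B) := by
    intro b hb
    rw [Finset.mem_filter] at hb
    rw [Fintype.mem_piFinset]
    intro j
    rw [hB, Finset.mem_filter]
    exact ⟨(Fintype.mem_piFinset.1 hb.1) j, hb.2 j⟩
  calc _ ≤ (Fintype.piFinset (fun _ : Fin k => B)).card := Finset.card_le_card hsub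
    _ = B.card ^ k := by
        rw [Fintype.card_piFinset, Finset.prod_const, Finset.card_univ, Fintype.card_fin]
    _ ≤ (S.card ^ (n - 1)) ^ k :=
        Nat.pow_le_pow_left (single_round_soundness_aux F n A hA S) k
    _ = S.card ^ (k * (n - 1)) := by rw [← pow_mul, Nat.mul_comm]
end
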